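/- Let R be a commutative Noetherian ring, A a standard graded R-algebra, and 𝔞 an ideal of R contained in the Jacobson radical of R. Let R̂ and be the 𝔞-adic completions of R and A, respectively. Then is a standard graded R̂-algebra and rt_{R̂}(Â) = rt_R(A). -/

import Mathlib

open MvPolynomial TensorProduct

/-- The ideal generated by the elements of `Q` of total degree at most `ℓ`. -/
noncomputable def Ideal.degLE {σ R : Type*} [CommRing R] (Q : Ideal (MvPolynomial σ R)) (ℓ : ℕ) :
    Ideal (MvPolynomial σ R) :=
  Ideal.span {q | q ∈ Q ∧ q.totalDegree ≤ ℓ}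

/-- The relation type of a presentation ideal `Q`. -/
noncomputable def relTypeKer {σ R : Type*} [CommRing R] (Q : Ideal (MvPolynomial σ R)) : ℕ :=
  sInf {ℓ : ℕ | 1 ≤ ℓ ∧ Q.degLE ℓ = Q}

/-- The relation type `rt_R(A)` with respect to the degree-one generating family `f`. -/
noncomputable def relType (R : Type*) {A : Type*} [CommRing R] [CommRing A] [Algebra R A]
    {ι : Type*} (f : ι → A) : ℕ :=
  relTypeKer (RingHom.ker (MvPolynomial.aeval f : MvPolynomial ι R →ₐ[R] A))

open DirectSum

section BaseChange
variable {R : Type*} (S : Type*) [CommRing R] [CommRing S] [Algebra R S]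
variable {M : Type*} [AddCommGroup M] [Module R M]

lemma range_lTensor_subtype (p : Submodule R M) :
    LinearMap.range (AlgebraTensorModule.lTensor S S p.subtype) = p.baseChange S := by
  apply le_antisymm
  · rintro x ⟨y, rfl⟩
    induction y using TensorProduct.induction_on with
    | zero => simp
    | tmul s w => simpa using Submodule.tmul_mem_baseChange_of_mem s w.2
    | add a b ha hb => rw [map_add]; exact Submodule.add_mem _ ha hb
  · rw [Submodule.baseChange_eq_span, Submodule.span_le]
    rintro - ⟨w, hw, rfl⟩
    exact ⟨(1 : S) ⊗ₜ[R] (⟨w, hw⟩ : p), by simp⟩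

lemma ker_lTensor_eq_baseChange [Module.Flat R S] {N : Type*} [AddCommGroup N] [Module R N]
    (g : M →ₗ[R] N) :
    LinearMap.ker (AlgebraTensorModule.lTensor S S g) = (LinearMap.ker g).baseChange S := by
  rw [Module.Flat.ker_lTensor_eq, range_lTensor_subtype]

end BaseChange

section MvBC
variable {R : Type*} (S : Type*) [CommRing R] [CommRing S] [Algebra R S] {σ : Type*}

local notation "φ" => MvPolynomial.map (algebraMap R S) (σ := σ)
local notation "ε" => MvPolynomial.algebraTensorAlgEquiv R (σ := σ) S

lemma totalDegree_map_le' (p : MvPolynomial σ R) : (φ p).totalDegree ≤ p.totalDegree :=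
  Finset.sup_le fun d hd => le_totalDegree (support_map_subset _ _ hd)

/-- image of baseChange under ε is the S-span of φ '' p -/
lemma map_epsilon_baseChange (p : Submodule R (MvPolynomial σ R)) :
    Submodule.map ((ε).toLinearEquiv : _ →ₗ[S] _) (p.baseChange S)
      = Submodule.span S (φ '' p) := by
  rw [Submodule.baseChange_eq_span, Submodule.map_span, Submodule.map_coe, ← Set.image_comp]
  congr 1
  ext x
  constructor
  · rintro ⟨q, hq, rfl⟩
    exact ⟨q, hq, by simp⟩
  · rintro ⟨q, hq, rfl⟩
    exact ⟨q, hq, by simp⟩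

/-- Ideal.map φ U, as a set, is the S-span of φ '' U. -/
lemma ideal_map_eq_span (U : Ideal (MvPolynomial σ R)) :
    (Ideal.map (φ : _ →+* _) U).restrictScalars S = Submodule.span S ((φ) '' U) := by
  apply le_antisymm
  · intro x hx
    replace hx : x ∈ Ideal.span ((φ) '' U) := hx
    set T := Submodule.span S ((φ) '' U) with hT
    have mulmem : ∀ (c : MvPolynomial σ S), ∀ x ∈ T, c * x ∈ T := by
      intro c x hx
      induction hx using Submodule.span_induction with
      | mem y hy =>
        obtain ⟨u, hu, rfl⟩ := hy
        induction c using MvPolynomial.induction_on generalizing u with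
        | C s =>
          rw [← MvPolynomial.smul_eq_C_mul]
          exact Submodule.smul_mem _ _ (Submodule.subset_span ⟨u, hu, rfl⟩)
        | add a b ha hb =>
          rw [add_mul]; exact Submodule.add_mem _ (ha u hu) (hb u hu)
        | mul_X a i ha =>
          rw [mul_assoc, ← MvPolynomial.map_X (f := algebraMap R S) (n := i), ← map_mul]
          exact ha _ (U.mul_mem_left _ hu)
      | zero => simpa using Submodule.zero_mem T
      | add y z _ _ hy hz => rw [mul_add]; exact Submodule.add_mem _ hy hz
      | smul s y _ hy => rw [mul_smul_comm]; exact Submodule.smul_mem _ _ hy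
    induction hx using Submodule.span_induction with
    | mem y hy => exact Submodule.subset_span hy
    | zero => exact Submodule.zero_mem _
    | add y z _ _ hy hz => exact Submodule.add_mem _ hy hz
    | smul c y _ hy => exact mulmem c y hy
  · rw [Submodule.span_le]
    rintro - ⟨u, hu, rfl⟩
    exact Ideal.mem_map_of_mem _ hu


section Ker
variable {A : Type*} [CommRing A] [Algebra R A] {ι : Type*} (f : ι → A)

lemma G_phi (p : MvPolynomial σ R) (g : σ → A) :
    (aeval (fun i => (1:S) ⊗ₜ[R] g i : σ → S ⊗[R] A)) ((φ) p)
      = 1 ⊗ₜ[R] (aeval g p) := by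
  rw [MvPolynomial.aeval_map_algebraMap]
  have := congrFun (congrArg (fun (h : MvPolynomial σ R →ₐ[R] S ⊗[R] A) => h.toFun)
    (MvPolynomial.comp_aeval g (Algebra.TensorProduct.includeRight (R := R) (A := S) (B := A)))) p
  simpa using this.symm

lemma G_epsilon (g : σ → A) (x : S ⊗[R] MvPolynomial σ R) :
    (aeval (fun i => (1:S) ⊗ₜ[R] g i : σ → S ⊗[R] A)) ((ε) x)
      = AlgebraTensorModule.lTensor S S (aeval g).toLinearMap x := by
  induction x using TensorProduct.induction_on with
  | zero => simp
  | tmul s p =>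
    rw [MvPolynomial.algebraTensorAlgEquiv_tmul]
    rw [map_smul]
    rw [G_phi]
    simp [TensorProduct.smul_tmul']
  | add a b ha hb => simp only [map_add, ha, hb]

/-- Lemma A: base change of the kernel. -/
lemma ker_aeval_baseChange [Module.Flat R S] (g : σ → A) :
    RingHom.ker (aeval (fun i => (1:S) ⊗ₜ[R] g i : σ → S ⊗[R] A) :
        MvPolynomial σ S →ₐ[S] S ⊗[R] A)
      = Ideal.map (φ : _ →+* _) (RingHom.ker (aeval g : MvPolynomial σ R →ₐ[R] A)) := by
  set K : Submodule R (MvPolynomial σ R) :=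
    Submodule.restrictScalars R (RingHom.ker (aeval g : MvPolynomial σ R →ₐ[R] A)) with hK
  have hker : LinearMap.ker ((aeval g : MvPolynomial σ R →ₐ[R] A).toLinearMap) = K := rfl
  ext p
  have key : p ∈ RingHom.ker (aeval (fun i => (1:S) ⊗ₜ[R] g i : σ → S ⊗[R] A) :
        MvPolynomial σ S →ₐ[S] S ⊗[R] A)
      ↔ p ∈ Submodule.span S ((φ) '' (K : Set (MvPolynomial σ R))) := by
    have h1 : (aeval (fun i => (1:S) ⊗ₜ[R] g i : σ → S ⊗[R] A)) p
        = AlgebraTensorModule.lTensor S S (aeval g).toLinearMap ((ε).symm p) := by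
      rw [← G_epsilon S g ((ε).symm p), AlgEquiv.apply_symm_apply]
    constructor
    · intro hp
      have hmem : (ε).symm p ∈ K.baseChange S := by
        rw [← hker, ← ker_lTensor_eq_baseChange]
        simpa [LinearMap.mem_ker, ← h1] using hp
      rw [← map_epsilon_baseChange]
      exact ⟨(ε).symm p, hmem, by simp⟩
    · intro hp
      rw [← map_epsilon_baseChange] at hp
      obtain ⟨y, hy, rfl⟩ := hp
      rw [← hker, ← ker_lTensor_eq_baseChange] at hy
      show (aeval (fun i => (1:S) ⊗ₜ[R] g i : σ → S ⊗[R] A)) ((ε) y) = 0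
      rw [G_epsilon]
      exact hy
  rw [key]
  have hspan := ideal_map_eq_span S (RingHom.ker (aeval g : MvPolynomial σ R →ₐ[R] A))
  constructor
  · intro h
    have h2 : p ∈ (Ideal.map (φ : _ →+* _)
        (RingHom.ker (aeval g : MvPolynomial σ R →ₐ[R] A))).restrictScalars S := by
      rw [hspan]; exact h
    exact h2
  · intro h
    have h2 : p ∈ (Ideal.map (φ : _ →+* _)
        (RingHom.ker (aeval g : MvPolynomial σ R →ₐ[R] A))).restrictScalars S := h
    rw [hspan] at h2
    exact h2

lemma degLE_le (Q : Ideal (MvPolynomial σ R)) (ℓ : ℕ) : Q.degLE ℓ ≤ Q :=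
  Ideal.span_le.mpr fun _ hq => hq.1

lemma map_degLE_le (Q : Ideal (MvPolynomial σ R)) (ℓ : ℕ) :
    Ideal.map (φ : _ →+* _) (Q.degLE ℓ) ≤ (Ideal.map (φ : _ →+* _) Q).degLE ℓ := by
  rw [Ideal.degLE, Ideal.map_span, Ideal.degLE]
  apply Ideal.span_mono
  rintro - ⟨q, ⟨hq, hdeg⟩, rfl⟩
  exact ⟨Ideal.mem_map_of_mem _ hq, le_trans (totalDegree_map_le' S q) hdeg⟩

lemma restrictTotalDegree_le_span (ℓ : ℕ) :
    (restrictTotalDegree σ S ℓ : Submodule S (MvPolynomial σ S))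
      ≤ Submodule.span S ((φ) '' (restrictTotalDegree σ R ℓ : Submodule R (MvPolynomial σ R))) := by
  intro p hp
  rw [MvPolynomial.as_sum p]
  apply Submodule.sum_mem
  intro α hα
  have hmem : (monomial α (1 : R)) ∈ restrictTotalDegree σ R ℓ := by
    rw [mem_restrictTotalDegree]
    exact le_trans (totalDegree_monomial_le α 1)
      (le_trans (le_totalDegree hα) ((mem_restrictTotalDegree σ ℓ p).mp hp))
  have : (monomial α (coeff α p)) = (coeff α p) • (φ) (monomial α (1 : R)) := by
    rw [MvPolynomial.map_monomial, map_one, MvPolynomial.smul_monomial, smul_eq_mul, mul_one]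
  rw [this]
  exact Submodule.smul_mem _ _ (Submodule.subset_span ⟨_, hmem, rfl⟩)

/-- Lemma B: the hard inclusion. -/
lemma degLE_map_le [Module.Flat R S] (g : σ → A) (ℓ : ℕ) :
    (Ideal.map (φ : _ →+* _) (RingHom.ker (aeval g : MvPolynomial σ R →ₐ[R] A))).degLE ℓ
      ≤ Ideal.map (φ : _ →+* _)
          ((RingHom.ker (aeval g : MvPolynomial σ R →ₐ[R] A)).degLE ℓ) := by
  set Q := RingHom.ker (aeval g : MvPolynomial σ R →ₐ[R] A) with hQ
  rw [Ideal.degLE, Ideal.span_le]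
  rintro p ⟨hp1, hp2⟩
  set Mℓ := (restrictTotalDegree σ R ℓ : Submodule R (MvPolynomial σ R)) with hMℓ
  set gl := ((aeval g : MvPolynomial σ R →ₐ[R] A).toLinearMap ∘ₗ Mℓ.subtype) with hgl
  -- Step 1 : find x with ε (lTensor x) = p
  have hp' : p ∈ Submodule.map ((ε).toLinearEquiv : _ →ₗ[S] _) (Mℓ.baseChange S) := by
    rw [map_epsilon_baseChange]
    exact restrictTotalDegree_le_span S ℓ ((mem_restrictTotalDegree σ ℓ p).mpr hp2)
  rw [← range_lTensor_subtype] at hp'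
  obtain ⟨-, ⟨x, rfl⟩, hxp⟩ := hp'
  -- Step 2 : x is killed by (lTensor gl)
  have hcomp : ∀ y : S ⊗[R] Mℓ, AlgebraTensorModule.lTensor S S gl y
      = AlgebraTensorModule.lTensor S S (aeval g : MvPolynomial σ R →ₐ[R] A).toLinearMap
          (AlgebraTensorModule.lTensor S S Mℓ.subtype y) := by
    intro y
    induction y using TensorProduct.induction_on with
    | zero => simp
    | tmul s w => simp [hgl]
    | add a b ha hb => simp only [map_add, ha, hb]
  have hx0 : AlgebraTensorModule.lTensor S S gl x = 0 := by
    rw [hcomp x, ← G_epsilon S g]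
    have hpker : p ∈ RingHom.ker (aeval (fun i => (1:S) ⊗ₜ[R] g i : σ → S ⊗[R] A) :
        MvPolynomial σ S →ₐ[S] S ⊗[R] A) := by
      rw [ker_aeval_baseChange]
      exact hp1
    show (aeval fun i => (1:S) ⊗ₜ[R] g i)
      ((ε) (AlgebraTensorModule.lTensor S S Mℓ.subtype x)) = 0
    have : ((ε) (AlgebraTensorModule.lTensor S S Mℓ.subtype x) : MvPolynomial σ S) = p := hxp
    rw [this]
    exact hpker
  -- Step 3 : conclude
  rw [← LinearMap.mem_ker, ker_lTensor_eq_baseChange] at hx0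
  have himg : Submodule.map (((ε).toLinearEquiv : _ →ₗ[S] _)
        ∘ₗ AlgebraTensorModule.lTensor S S Mℓ.subtype) ((LinearMap.ker gl).baseChange S)
      ≤ Submodule.restrictScalars S (Ideal.map (φ : _ →+* _) (Q.degLE ℓ)) := by
    rw [Submodule.baseChange_eq_span, Submodule.map_span, Submodule.span_le]
    rintro - ⟨-, ⟨k, hk, rfl⟩, rfl⟩
    have hkQ : (k : MvPolynomial σ R) ∈ Q.degLE ℓ := by
      apply Ideal.subset_span
      refine ⟨?_, (mem_restrictTotalDegree σ ℓ (k : MvPolynomial σ R)).mp k.2⟩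
      have : aeval g (k : MvPolynomial σ R) = 0 := hk
      exact this
    simp only [TensorProduct.mk_apply]
    have heval : (((ε).toLinearEquiv : _ →ₗ[S] _)
        ∘ₗ AlgebraTensorModule.lTensor S S Mℓ.subtype) ((1:S) ⊗ₜ[R] k)
        = (φ) (k : MvPolynomial σ R) := by simp
    rw [heval]
    exact Ideal.mem_map_of_mem _ hkQ
  have : p ∈ Submodule.map (((ε).toLinearEquiv : _ →ₗ[S] _)
      ∘ₗ AlgebraTensorModule.lTensor S S Mℓ.subtype) ((LinearMap.ker gl).baseChange S) :=
    ⟨x, hx0, hxp⟩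
  exact himg this

end Ker

end MvBC

section FF
variable {R : Type*} (S : Type*) [CommRing R] [CommRing S] [Algebra R S]
variable {M : Type*} [AddCommGroup M] [Module R M]

lemma coe_lTensor_eq {N P : Type*} [AddCommGroup N] [AddCommGroup P] [Module R N] [Module R P]
    (f : N →ₗ[R] P) :
    ⇑(LinearMap.lTensor S f) = ⇑(AlgebraTensorModule.lTensor S S f) := by
  funext x
  induction x using TensorProduct.induction_on with
  | zero => simp
  | tmul s n => simp
  | add a b ha hb => simp only [map_add, ha, hb]

lemma range_lTensor_subtype' (p : Submodule R M) :
    LinearMap.range (LinearMap.lTensor S p.subtype)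
      = Submodule.restrictScalars R (p.baseChange S) := by
  ext x
  rw [LinearMap.mem_range]
  constructor
  · rintro ⟨y, rfl⟩
    have : LinearMap.lTensor S p.subtype y = AlgebraTensorModule.lTensor S S p.subtype y := by
      rw [coe_lTensor_eq]
    rw [this, ← range_lTensor_subtype S p]
    exact ⟨y, rfl⟩
  · intro hx
    rw [Submodule.restrictScalars_mem, ← range_lTensor_subtype S p] at hx
    obtain ⟨y, rfl⟩ := hx
    exact ⟨y, by rw [coe_lTensor_eq]⟩

/-- Faithfully flat descent of an inclusion of submodules which becomes an equality. -/
lemma Submodule.eq_of_baseChange_eq [Module.FaithfullyFlat R S] (U V : Submodule R M)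
    (hUV : U ≤ V) (h : U.baseChange S = V.baseChange S) : U = V := by
  refine le_antisymm hUV ?_
  set π : V →ₗ[R] M ⧸ U := U.mkQ ∘ₗ V.subtype with hπ
  have hlt : LinearMap.lTensor S π = 0 := by
    rw [hπ, LinearMap.lTensor_comp]
    apply LinearMap.ext
    intro x
    have hx : LinearMap.lTensor S V.subtype x ∈
        LinearMap.range (LinearMap.lTensor S U.subtype) := by
      rw [range_lTensor_subtype', h, ← range_lTensor_subtype']
      exact ⟨x, rfl⟩
    obtain ⟨y, hy⟩ := hx
    rw [LinearMap.comp_apply, ← hy, ← LinearMap.comp_apply, ← LinearMap.lTensor_comp]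
    have hzero : (U.mkQ ∘ₗ U.subtype) = 0 := by
      apply LinearMap.ext
      intro u
      simpa using (Submodule.Quotient.mk_eq_zero U).mpr u.2
    rw [hzero]
    simp
  have hπ0 : π = 0 := (Module.FaithfullyFlat.zero_iff_lTensor_zero R S π).mpr hlt
  intro v hv
  have : π ⟨v, hv⟩ = 0 := by rw [hπ0]; rfl
  have : Submodule.Quotient.mk v = (0 : M ⧸ U) := this
  exact (Submodule.Quotient.mk_eq_zero U).mp this

variable {σ : Type*}

/-- Faithfully flat descent for ideals of the polynomial ring. -/
lemma Ideal.eq_of_map_eq [Module.FaithfullyFlat R S] (U V : Ideal (MvPolynomial σ R))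
    (hUV : U ≤ V)
    (h : Ideal.map (MvPolynomial.map (algebraMap R S) : _ →+* _) U
       = Ideal.map (MvPolynomial.map (algebraMap R S) : _ →+* _) V) : U = V := by
  have hb : (U.restrictScalars R).baseChange S = (V.restrictScalars R).baseChange S := by
    apply Submodule.map_injective_of_injective
      (f := ((MvPolynomial.algebraTensorAlgEquiv R (σ := σ) S).toLinearEquiv : _ →ₗ[S] _))
      (by exact (MvPolynomial.algebraTensorAlgEquiv R (σ := σ) S).toLinearEquiv.injective)
    rw [map_epsilon_baseChange, map_epsilon_baseChange]
    have h1 := ideal_map_eq_span S U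
    have h2 := ideal_map_eq_span S V
    calc Submodule.span S ((MvPolynomial.map (algebraMap R S)) '' (U.restrictScalars R))
        = (Ideal.map (MvPolynomial.map (algebraMap R S) : _ →+* _) U).restrictScalars S :=
          h1.symm
      _ = (Ideal.map (MvPolynomial.map (algebraMap R S) : _ →+* _) V).restrictScalars S := by
          rw [h]
      _ = Submodule.span S ((MvPolynomial.map (algebraMap R S)) '' (V.restrictScalars R)) := h2
  have := Submodule.eq_of_baseChange_eq S (U.restrictScalars R) (V.restrictScalars R) hUV hb
  ext x
  constructor
  · intro hx; exact (this ▸ (Submodule.restrictScalars_mem R U x).mpr hx : x ∈ V.restrictScalars R)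
  · intro hx; exact (this.symm ▸ (Submodule.restrictScalars_mem R V x).mpr hx : x ∈ U.restrictScalars R)

end FF


section AdicFF

variable {R : Type*} [CommRing R] [IsNoetherianRing R]

lemma faithfullyFlat_adicCompletion (𝔞 : Ideal R) (hjac : 𝔞 ≤ (⊥ : Ideal R).jacobson) :
    Module.FaithfullyFlat R (AdicCompletion 𝔞 R) := by
  haveI : Module.Flat R (AdicCompletion 𝔞 R) := inferInstance
  refine { toFlat := inferInstance, submodule_ne_top := ?_ }
  intro 𝔪 hmax htop
  set q := AdicCompletion.eval 𝔞 R 1 with hq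
  have hsurj : Function.Surjective ⇑q := AdicCompletion.eval_surjective 𝔞 R 1
  have h1 : Submodule.map q (𝔪 • (⊤ : Submodule R (AdicCompletion 𝔞 R)))
      = 𝔪 • (⊤ : Submodule R (R ⧸ (𝔞 ^ 1 • ⊤ : Submodule R R))) := by
    rw [Submodule.map_smul'', Submodule.map_top, LinearMap.range_eq_top.2 hsurj]
  rw [htop, Submodule.map_top, LinearMap.range_eq_top.2 hsurj] at h1
  -- h1 : ⊤ = 𝔪 • ⊤ in the quotient
  have hm : 𝔪 • (⊤ : Submodule R R) = (𝔪 : Submodule R R) := by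
    apply le_antisymm
    · refine Submodule.smul_le.2 fun r hr x _ => ?_
      simpa [smul_eq_mul] using Ideal.mul_mem_right x 𝔪 hr
    · intro x hx
      have := Submodule.smul_mem_smul (M := R) hx (Submodule.mem_top (x := (1 : R)))
      simpa using this
  have h2 : Submodule.map (𝔞 ^ 1 • ⊤ : Submodule R R).mkQ (𝔪 : Submodule R R)
      = 𝔪 • (⊤ : Submodule R (R ⧸ (𝔞 ^ 1 • ⊤ : Submodule R R))) := by
    conv_lhs => rw [← hm]
    rw [Submodule.map_smul'', Submodule.map_top, Submodule.range_mkQ]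
  have h3 : Submodule.comap (𝔞 ^ 1 • ⊤ : Submodule R R).mkQ
      (Submodule.map (𝔞 ^ 1 • ⊤ : Submodule R R).mkQ (𝔪 : Submodule R R)) = ⊤ := by
    rw [h2, ← h1, Submodule.comap_top]
  rw [Submodule.comap_map_eq, Submodule.ker_mkQ] at h3
  have hjm : (⊥ : Ideal R).jacobson ≤ 𝔪 := sInf_le ⟨bot_le, hmax⟩
  have hle : (𝔞 ^ 1 • ⊤ : Submodule R R) ≤ (𝔪 : Submodule R R) := by
    refine Submodule.smul_le.2 fun r hr x _ => ?_
    have hr' : r ∈ 𝔪 := hjm (hjac (by rwa [pow_one] at hr))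
    simpa [smul_eq_mul] using Ideal.mul_mem_right x 𝔪 hr'
  rw [sup_eq_left.mpr hle] at h3
  exact hmax.ne_top h3

end AdicFF

section RelType
variable {R : Type*} (S : Type*) [CommRing R] [CommRing S] [Algebra R S]
variable {σ : Type*} {A : Type*} [CommRing A] [Algebra R A]

local notation "φ" => MvPolynomial.map (algebraMap R S) (σ := σ)

lemma relTypeKer_baseChange [Module.FaithfullyFlat R S] (g : σ → A) :
    relTypeKer (RingHom.ker (aeval (fun i => (1:S) ⊗ₜ[R] g i : σ → S ⊗[R] A) :
        MvPolynomial σ S →ₐ[S] S ⊗[R] A))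
      = relTypeKer (RingHom.ker (aeval g : MvPolynomial σ R →ₐ[R] A)) := by
  set Q := RingHom.ker (aeval g : MvPolynomial σ R →ₐ[R] A) with hQ
  unfold relTypeKer
  congr 1
  ext ℓ
  simp only [Set.mem_setOf_eq]
  rw [ker_aeval_baseChange]
  constructor
  · rintro ⟨h1, h2⟩
    refine ⟨h1, ?_⟩
    have hmapeq : Ideal.map (φ : _ →+* _) (Q.degLE ℓ) = Ideal.map (φ : _ →+* _) Q := by
      apply le_antisymm (Ideal.map_mono (degLE_le Q ℓ))
      calc Ideal.map (φ : _ →+* _) Q = (Ideal.map (φ : _ →+* _) Q).degLE ℓ := h2.symm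
        _ ≤ Ideal.map (φ : _ →+* _) (Q.degLE ℓ) := degLE_map_le S g ℓ
    exact Ideal.eq_of_map_eq S (Q.degLE ℓ) Q (degLE_le Q ℓ) hmapeq
  · rintro ⟨h1, h2⟩
    refine ⟨h1, le_antisymm (degLE_le _ ℓ) ?_⟩
    calc Ideal.map (φ : _ →+* _) Q = Ideal.map (φ : _ →+* _) (Q.degLE ℓ) := by rw [h2]
      _ ≤ (Ideal.map (φ : _ →+* _) Q).degLE ℓ := map_degLE_le S Q ℓ

end RelType

section GradedBC
variable {R : Type*} (S : Type*) [CommRing R] [CommRing S] [Algebra R S]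
variable {A : Type*} [CommRing A] [Algebra R A]

lemma Submodule.baseChange_mul (p q : Submodule R A) :
    (p * q).baseChange S = p.baseChange S * q.baseChange S := by
  apply le_antisymm
  · have key : ∀ x ∈ p * q, (1 : S) ⊗ₜ[R] x ∈ p.baseChange S * q.baseChange S := by
      intro x hx
      refine Submodule.mul_induction_on hx ?_ ?_
      · intro a ha b hb
        have : (1 : S) ⊗ₜ[R] (a * b) = ((1 : S) ⊗ₜ[R] a) * ((1 : S) ⊗ₜ[R] b) := by
          rw [Algebra.TensorProduct.tmul_mul_tmul, one_mul]
        rw [this]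
        exact Submodule.mul_mem_mul (Submodule.tmul_mem_baseChange_of_mem _ ha)
          (Submodule.tmul_mem_baseChange_of_mem _ hb)
      · intro x y hx hy
        rw [TensorProduct.tmul_add]
        exact Submodule.add_mem _ hx hy
    rw [Submodule.baseChange_eq_span, Submodule.span_le]
    rintro - ⟨x, hx, rfl⟩
    simpa using key x hx
  · refine Submodule.mul_le.mpr fun x hx y hy => ?_
    rw [Submodule.baseChange_eq_span] at hx hy
    induction hx using Submodule.span_induction with
    | mem x hxm =>
      obtain ⟨a, ha, rfl⟩ := hxm
      induction hy using Submodule.span_induction with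
      | mem y hym =>
        obtain ⟨b, hb, rfl⟩ := hym
        simp only [TensorProduct.mk_apply]
        have : ((1 : S) ⊗ₜ[R] a) * ((1 : S) ⊗ₜ[R] b) = (1 : S) ⊗ₜ[R] (a * b) := by
          rw [Algebra.TensorProduct.tmul_mul_tmul, one_mul]
        rw [this]
        exact Submodule.tmul_mem_baseChange_of_mem _ (Submodule.mul_mem_mul ha hb)
      | zero => rw [mul_zero]; exact Submodule.zero_mem _
      | add y z _ _ hy hz => rw [mul_add]; exact Submodule.add_mem _ hy hz
      | smul s y _ hy => rw [mul_smul_comm]; exact Submodule.smul_mem _ _ hy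
    | zero => rw [zero_mul]; exact Submodule.zero_mem _
    | add x z _ _ hx hz => rw [add_mul]; exact Submodule.add_mem _ hx hz
    | smul s x _ hx => rw [smul_mul_assoc]; exact Submodule.smul_mem _ _ hx

variable (𝒜 : ℕ → Submodule R A) [GradedAlgebra 𝒜]

lemma lTensor_subtype_injective [Module.Flat R S] (n : ℕ) :
    Function.Injective (AlgebraTensorModule.lTensor S S (𝒜 n).subtype) := by
  have h1 : Function.Injective (LinearMap.lTensor S (𝒜 n).subtype) :=
    Module.Flat.lTensor_preserves_injective_linearMap _ (Submodule.injective_subtype _)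
  have h2 : ⇑(LinearMap.lTensor S (𝒜 n).subtype)
      = ⇑(AlgebraTensorModule.lTensor S S (𝒜 n).subtype) := by
    funext x
    induction x using TensorProduct.induction_on with
    | zero => simp
    | tmul s w => simp
    | add a b ha hb => simp only [map_add, ha, hb]
  rw [← h2]
  exact h1

noncomputable def enBC [Module.Flat R S] (n : ℕ) :
    (S ⊗[R] 𝒜 n) ≃ₗ[S] ((𝒜 n).baseChange S) :=
  (LinearEquiv.ofInjective (AlgebraTensorModule.lTensor S S (𝒜 n).subtype)
      (lTensor_subtype_injective S 𝒜 n)).trans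
    (LinearEquiv.ofEq _ _ (range_lTensor_subtype S (𝒜 n)))

lemma enBC_coe [Module.Flat R S] (n : ℕ) (y : S ⊗[R] 𝒜 n) :
    ((enBC S 𝒜 n y : (𝒜 n).baseChange S) : S ⊗[R] A)
      = AlgebraTensorModule.lTensor S S (𝒜 n).subtype y := rfl

noncomputable def E1BC [Module.Flat R S] :
    (⨁ n : ℕ, S ⊗[R] 𝒜 n) ≃ₗ[S] ⨁ n : ℕ, ((𝒜 n).baseChange S) :=
  DFinsupp.mapRange.linearEquiv (enBC S 𝒜)

noncomputable def E23BC : (⨁ n : ℕ, S ⊗[R] 𝒜 n) ≃ₗ[R] S ⊗[R] A :=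
  (TensorProduct.directSumRight R R S fun n : ℕ => (𝒜 n : Type _)).symm.trans
    (LinearEquiv.lTensor S (DirectSum.decomposeLinearEquiv 𝒜).symm)

lemma E1BC_of [Module.Flat R S] (n : ℕ) (y : S ⊗[R] 𝒜 n) :
    E1BC S 𝒜 (DirectSum.of _ n y) = DirectSum.of _ n (enBC S 𝒜 n y) := by
  show DFinsupp.mapRange.linearEquiv (enBC S 𝒜) (DFinsupp.single n y)
    = DFinsupp.single n (enBC S 𝒜 n y)
  rw [DFinsupp.mapRange.linearEquiv_apply, DFinsupp.mapRange_single]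

lemma E23BC_of_tmul (n : ℕ) (s : S) (a : 𝒜 n) :
    E23BC S 𝒜 (DirectSum.of _ n (s ⊗ₜ[R] a)) = s ⊗ₜ[R] (a : A) := by
  show (LinearEquiv.lTensor S (DirectSum.decomposeLinearEquiv 𝒜).symm)
    ((TensorProduct.directSumRight R R S fun n : ℕ => (𝒜 n : Type _)).symm
      (DirectSum.of _ n (s ⊗ₜ[R] a))) = s ⊗ₜ[R] (a : A)
  rw [← DirectSum.lof_eq_of R, TensorProduct.directSumRight_symm_lof_tmul]
  have h3 : (LinearEquiv.lTensor S (DirectSum.decomposeLinearEquiv 𝒜).symm)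
      (s ⊗ₜ[R] (DirectSum.lof R ℕ (fun n : ℕ => (𝒜 n : Type _)) n a))
      = s ⊗ₜ[R] ((DirectSum.decomposeLinearEquiv 𝒜).symm
          (DirectSum.lof R ℕ (fun n : ℕ => (𝒜 n : Type _)) n a)) :=
    LinearEquiv.lTensor_tmul S _ s _
  rw [h3, DirectSum.lof_eq_of, DirectSum.decomposeLinearEquiv_symm_apply,
    DirectSum.decompose_symm_of]

lemma coeAddMonoidHom_E1BC [Module.Flat R S] (x : ⨁ n : ℕ, S ⊗[R] 𝒜 n) :
    DirectSum.coeAddMonoidHom (fun n => (𝒜 n).baseChange S) (E1BC S 𝒜 x)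
      = E23BC S 𝒜 x := by
  induction x using DirectSum.induction_on with
  | zero => simp only [map_zero]
  | of n y =>
    induction y using TensorProduct.induction_on with
    | zero =>
      rw [map_zero (DirectSum.of (fun n : ℕ => S ⊗[R] 𝒜 n) n)]
      simp only [map_zero]
    | tmul s a =>
      rw [E1BC_of, DirectSum.coeAddMonoidHom_of, enBC_coe, E23BC_of_tmul]
      rfl
    | add y z hy hz =>
      rw [map_add (DirectSum.of (fun n : ℕ => S ⊗[R] 𝒜 n) n), map_add, map_add, map_add, hy, hz]
  | add x y hx hy =>
    rw [map_add, map_add, map_add, hx, hy]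

lemma isInternal_baseChange [Module.Flat R S] :
    DirectSum.IsInternal (fun n => (𝒜 n).baseChange S) := by
  have hcoe : ⇑(DirectSum.coeAddMonoidHom (fun n => (𝒜 n).baseChange S))
      = ⇑(E23BC S 𝒜) ∘ ⇑(E1BC S 𝒜).symm := by
    funext z
    have h := coeAddMonoidHom_E1BC S 𝒜 ((E1BC S 𝒜).symm z)
    rw [LinearEquiv.apply_symm_apply] at h
    exact h
  show Function.Bijective ⇑(DirectSum.coeAddMonoidHom (fun n => (𝒜 n).baseChange S))
  rw [hcoe]
  exact (E23BC S 𝒜).bijective.comp (E1BC S 𝒜).symm.bijective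

/-- The base-changed grading is a graded algebra structure on `S ⊗ A`. -/
noncomputable def gradedAlgebraBaseChange [Module.Flat R S] :
    GradedAlgebra (fun n => (𝒜 n).baseChange S) :=
  { toDecomposition := (isInternal_baseChange S 𝒜).chooseDecomposition
    one_mem := by
      rw [Algebra.TensorProduct.one_def]
      exact Submodule.tmul_mem_baseChange_of_mem 1 (SetLike.one_mem_graded 𝒜)
    mul_mem := by
      intro i j x y hx hy
      have h1 : x * y ∈ (𝒜 i).baseChange S * (𝒜 j).baseChange S :=
        Submodule.mul_mem_mul hx hy
      rw [← Submodule.baseChange_mul] at h1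
      exact Submodule.baseChange_mono S
        (Submodule.mul_le.mpr fun a ha b hb => SetLike.mul_mem_graded ha hb) h1 }

end GradedBC

/-- Let `R` be a commutative Noetherian ring, `A` a standard graded
`R`-algebra, and `𝔞` an ideal of `R` contained in the Jacobson radical of `R`.  Let
`R̂ = AdicCompletion 𝔞 R` be the `𝔞`-adic completion of `R` and `Â = R̂ ⊗_R A` the
`𝔞`-adic completion of the (standard graded, degreewise finitely generated) algebra `A`.
Then `Â` is a standard graded `R̂`-algebra and `rt_{R̂}(Â) = rt_R(A)`. -/
theorem relation_type_statement_5
    {R A : Type*} [CommRing R] [IsNoetherianRing R] [CommRing A] [Algebra R A]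
    (𝒜 : ℕ → Submodule R A) [GradedAlgebra 𝒜]
    (h0 : 𝒜 0 = (1 : Submodule R A)) (hfg : (𝒜 1).FG)
    (hstd : ∀ n : ℕ, 𝒜 (n + 1) = 𝒜 1 * 𝒜 n)
    {m : ℕ} (f : Fin m → A) (hf : Submodule.span R (Set.range f) = 𝒜 1)
    (𝔞 : Ideal R) (hjac : 𝔞 ≤ (⊥ : Ideal R).jacobson) :
    (∃ ℬ : ℕ → Submodule (AdicCompletion 𝔞 R) (AdicCompletion 𝔞 R ⊗[R] A),
      ∃ _ : GradedAlgebra ℬ,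
        ℬ 0 = 1 ∧ (ℬ 1).FG ∧ (∀ n : ℕ, ℬ (n + 1) = ℬ 1 * ℬ n) ∧
        Submodule.span (AdicCompletion 𝔞 R)
          (Set.range fun i : Fin m =>
            ((1 : AdicCompletion 𝔞 R) ⊗ₜ[R] f i : AdicCompletion 𝔞 R ⊗[R] A)) = ℬ 1)
    ∧ relType (AdicCompletion 𝔞 R)
        (fun i : Fin m =>
          ((1 : AdicCompletion 𝔞 R) ⊗ₜ[R] f i : AdicCompletion 𝔞 R ⊗[R] A))
      = relType R f := by
  classical
  haveI hflat : Module.Flat R (AdicCompletion 𝔞 R) := inferInstance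
  haveI hff : Module.FaithfullyFlat R (AdicCompletion 𝔞 R) :=
    faithfullyFlat_adicCompletion 𝔞 hjac
  constructor
  · refine ⟨fun n => (𝒜 n).baseChange (AdicCompletion 𝔞 R),
      gradedAlgebraBaseChange _ 𝒜, ?_, ?_, ?_, ?_⟩
    · show (𝒜 0).baseChange (AdicCompletion 𝔞 R) = 1
      rw [h0, Submodule.one_eq_span, Submodule.baseChange_span, Set.image_singleton,
        Submodule.one_eq_span]
      congr 1
    · show ((𝒜 1).baseChange (AdicCompletion 𝔞 R)).FG
      rw [← hf, Submodule.baseChange_span]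
      exact Submodule.fg_span (((Set.finite_range f).image _))
    · intro n
      show (𝒜 (n + 1)).baseChange (AdicCompletion 𝔞 R) = _
      rw [hstd n, Submodule.baseChange_mul]
    · show _ = (𝒜 1).baseChange (AdicCompletion 𝔞 R)
      rw [← hf, Submodule.baseChange_span, ← Set.range_comp]
      rfl
  · exact relTypeKer_baseChange (AdicCompletion 𝔞 R) f
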